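/- Let R = F_2[v, v^{-1}] and d ≥ 1, D ∈ {2d, 2d+1}. Define the free R-module A with basis {h^0, h^1, ..., h^d, l_0, l_1, ..., l_d} and a commutative R-algebra structure determined by: h·l_i = l_{i-1} for i > 0, h·l_0 = 0, l_i·l_j = l_0 if i = j = d and D ≡ 0 mod 4 and l_i·l_j = 0 otherwise, and h^{d+1} = v·l_{D-d-2^n} if D ≥ 2^{n+1}−1 (interpreting l_s = 0 for s < 0) and h^{d+1} = 0 if D < 2^{n+1}−1. Then this multiplication is well-defined, associative and commutative. -/
import Mathlib


noncomputable section

/-- The coefficient ring `F₂[v, v⁻¹]`. -/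
abbrev R2 : Type := LaurentPolynomial (ZMod 2)

/-- The invertible element `v ∈ F₂[v, v⁻¹]`. -/
def vElt : R2 := LaurentPolynomial.T 1

/-- Index type for the basis `h^0, …, h^d` (left) and `l_0, …, l_d` (right) of
`K(n)^*(Q; F₂)` for a split quadric of dimension `D ∈ {2d, 2d+1}`. -/
abbrev QIdx (d : ℕ) := Fin (d + 1) ⊕ Fin (d + 1)

/-- The basis vector `h^a` (with `h^a = 0` for `a` out of range). -/
def hSingle (d : ℕ) (a : ℤ) (r : R2) : QIdx d → R2 :=
  fun k => match k with
  | .inl j => if (j : ℤ) = a then r else 0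
  | .inr _ => 0

/-- The basis vector `l_i` scaled by `r` (with `l_i = 0` for `i` out of range, in particular
for `i < 0`). -/
def lSingle (d : ℕ) (i : ℤ) (r : R2) : QIdx d → R2 :=
  fun k => match k with
  | .inl _ => 0
  | .inr j => if (j : ℤ) = i then r else 0

/-- Structure constants of `K(n)^*(Q; F₂)`: products of basis elements, following the
multiplication table `h·l_i = l_{i-1}` (`i > 0`), `h·l_0 = 0`,
`l_i·l_j = l_0` iff `i = j = d` and `D ≡ 0 mod 4` (else `0`), and
`h^{d+1} = v·l_{D-d-2^n}` if `D ≥ 2^{n+1} - 1`, `h^{d+1} = 0` otherwise. -/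
def basisMul (n d D : ℕ) : QIdx d → QIdx d → (QIdx d → R2) :=
  fun x y => match x, y with
  | .inl a, .inl b =>
      if (a : ℕ) + b ≤ d then hSingle d ((a : ℕ) + b) 1
      else if 2 ^ (n + 1) - 1 ≤ D then
        lSingle d ((D : ℤ) - 2 ^ n + 1 - a - b) vElt
      else 0
  | .inl a, .inr i => lSingle d ((i : ℤ) - a) 1
  | .inr i, .inl a => lSingle d ((i : ℤ) - a) 1
  | .inr i, .inr j =>
      if (i : ℕ) = d ∧ (j : ℕ) = d ∧ D % 4 = 0 then lSingle d 0 1 else 0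

/-- The bilinear extension of the structure constants to the free `F₂[v,v⁻¹]`-module on the
basis `h^0, …, h^d, l_0, …, l_d`. -/
def quadricMul (n d D : ℕ) (x y : QIdx d → R2) : QIdx d → R2 :=
  fun k => ∑ i : QIdx d, ∑ j : QIdx d, x i * y j * basisMul n d D i j k

/-- The multiplication table of `K(n)^*(Q; F₂)` of a split quadric of dimension
`D ∈ {2d, 2d+1}` defines a well-defined, associative and commutative multiplication,
with unit `h^0`. -/
def toFinQ (d : ℕ) (a : ℤ) : Fin (d + 1) := ⟨a.toNat % (d + 1), Nat.mod_lt _ (Nat.succ_pos d)⟩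

lemma toFinQ_coe {d : ℕ} {a : ℤ} (h0 : 0 ≤ a) (h1 : a ≤ d) :
    ((toFinQ d a : Fin (d + 1)) : ℤ) = a := by
  have h : a.toNat % (d + 1) = a.toNat := Nat.mod_eq_of_lt (by omega)
  simp only [toFinQ, Fin.val_mk, h]
  omega

lemma toFinQ_coe_nat {d : ℕ} {a : ℤ} (h0 : 0 ≤ a) (h1 : a ≤ d) :
    ((toFinQ d a : Fin (d + 1)) : ℕ) = a.toNat := by
  have h : a.toNat % (d + 1) = a.toNat := Nat.mod_eq_of_lt (by omega)
  simp only [toFinQ, Fin.val_mk, h]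

lemma lSingle_out {d : ℕ} {s : ℤ} (h : s < 0 ∨ (d : ℤ) < s) (r : R2) (t : QIdx d) :
    lSingle d s r t = 0 := by
  cases t with
  | inl j => simp [lSingle]
  | inr j =>
      have : (j : ℤ) ≠ s := by have := j.isLt; omega
      simp [lSingle, this]

lemma lSingle_congr {d : ℕ} {s s' : ℤ} (h : s = s') (r : R2) :
    lSingle d s r = lSingle d s' r := by rw [h]

lemma sum_hSingle_mul {d : ℕ} (a : ℤ) (r : R2) (g : QIdx d → R2) :
    ∑ m : QIdx d, hSingle d a r m * g m =
      if 0 ≤ a ∧ a ≤ d then r * g (.inl (toFinQ d a)) else 0 := by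
  rw [Fintype.sum_sum_type]
  have h2 : ∑ j : Fin (d + 1), hSingle d a r (.inr j) * g (.inr j) = 0 := by
    simp [hSingle]
  rw [h2, add_zero]
  by_cases h : 0 ≤ a ∧ a ≤ d
  · rw [if_pos h]
    rw [Finset.sum_eq_single (toFinQ d a)]
    · rw [show hSingle d a r (.inl (toFinQ d a)) = r by simp [hSingle, toFinQ_coe h.1 h.2]]
    · intro b _ hb
      have : (b : ℤ) ≠ a := by
        intro hba
        apply hb
        apply Fin.ext
        have h1 := toFinQ_coe (d := d) h.1 h.2
        omega
      simp [hSingle, this]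
    · simp
  · rw [if_neg h]
    apply Finset.sum_eq_zero
    intro b _
    have : (b : ℤ) ≠ a := by have := b.isLt; omega
    simp [hSingle, this]

lemma sum_lSingle_mul {d : ℕ} (a : ℤ) (r : R2) (g : QIdx d → R2) :
    ∑ m : QIdx d, lSingle d a r m * g m =
      if 0 ≤ a ∧ a ≤ d then r * g (.inr (toFinQ d a)) else 0 := by
  rw [Fintype.sum_sum_type]
  have h2 : ∑ j : Fin (d + 1), lSingle d a r (.inl j) * g (.inl j) = 0 := by
    simp [lSingle]
  rw [h2, zero_add]
  by_cases h : 0 ≤ a ∧ a ≤ d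
  · rw [if_pos h]
    rw [Finset.sum_eq_single (toFinQ d a)]
    · rw [show lSingle d a r (.inr (toFinQ d a)) = r by simp [lSingle, toFinQ_coe h.1 h.2]]
    · intro b _ hb
      have : (b : ℤ) ≠ a := by
        intro hba
        apply hb
        apply Fin.ext
        have h1 := toFinQ_coe (d := d) h.1 h.2
        omega
      simp [lSingle, this]
    · simp
  · rw [if_neg h]
    apply Finset.sum_eq_zero
    intro b _
    have : (b : ℤ) ≠ a := by have := b.isLt; omega
    simp [lSingle, this]

lemma basisMul_ll (n d D : ℕ) (a b : Fin (d + 1)) :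
    basisMul n d D (.inl a) (.inl b) =
      if (a : ℕ) + b ≤ d then hSingle d ((a : ℕ) + b) 1
      else if 2 ^ (n + 1) - 1 ≤ D then
        lSingle d ((D : ℤ) - 2 ^ n + 1 - a - b) vElt
      else 0 := rfl

lemma basisMul_lr (n d D : ℕ) (a i : Fin (d + 1)) :
    basisMul n d D (.inl a) (.inr i) = lSingle d ((i : ℤ) - a) 1 := rfl

lemma basisMul_rl (n d D : ℕ) (i a : Fin (d + 1)) :
    basisMul n d D (.inr i) (.inl a) = lSingle d ((i : ℤ) - a) 1 := rfl

lemma basisMul_rr (n d D : ℕ) (i j : Fin (d + 1)) :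
    basisMul n d D (.inr i) (.inr j) =
      if (i : ℕ) = d ∧ (j : ℕ) = d ∧ D % 4 = 0 then lSingle d 0 1 else 0 := rfl

lemma basisMul_comm (n d D : ℕ) (x y : QIdx d) : basisMul n d D x y = basisMul n d D y x := by
  rcases x with a | i <;> rcases y with b | j
  · simp only [basisMul]
    refine if_congr (by omega) ?_ (if_congr Iff.rfl ?_ rfl)
    · congr 1; push_cast; ring
    · congr 1; push_cast; ring
  · rfl
  · rfl
  · simp only [basisMul]
    exact if_congr (by tauto) rfl rfl


lemma hSingle_congrP {d : ℕ} {X Y : ℤ} (r : R2) (t : QIdx d) (h : X = Y) :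
    hSingle d X r t = hSingle d Y r t := by rw [h]

lemma lSingle_congrP {d : ℕ} {X Y : ℤ} (r : R2) (t : QIdx d) (h : X = Y) :
    lSingle d X r t = lSingle d Y r t := by rw [h]

lemma mul_lSingle {d : ℕ} (s : ℤ) (r : R2) (t : QIdx d) :
    r * lSingle d s 1 t = lSingle d s r t := by
  cases t <;> simp [lSingle, mul_ite]

section
variable (n d D : ℕ)

lemma contract_h_right {e : ℤ} (h0 : 0 ≤ e) (h1 : e ≤ d) (c : Fin (d + 1)) (t : QIdx d) :
    ∑ m : QIdx d, hSingle d e 1 m * basisMul n d D m (.inl c) t =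
      if e.toNat + (c : ℕ) ≤ d then hSingle d (e + c) 1 t
      else if 2 ^ (n + 1) - 1 ≤ D then
        lSingle d ((D : ℤ) - 2 ^ n + 1 - e - c) vElt t
      else 0 := by
  rw [sum_hSingle_mul, if_pos ⟨h0, h1⟩, one_mul, basisMul_ll]
  have hZ := toFinQ_coe h0 h1
  have hN := toFinQ_coe_nat h0 h1
  simp only [ite_apply, Pi.zero_apply]
  refine if_congr (by omega) (hSingle_congrP _ _ (by omega))
    (if_congr Iff.rfl (lSingle_congrP _ _ (by omega)) rfl)

lemma contract_h_left {e : ℤ} (h0 : 0 ≤ e) (h1 : e ≤ d) (a : Fin (d + 1)) (t : QIdx d) :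
    ∑ m : QIdx d, hSingle d e 1 m * basisMul n d D (.inl a) m t =
      if (a : ℕ) + e.toNat ≤ d then hSingle d (a + e) 1 t
      else if 2 ^ (n + 1) - 1 ≤ D then
        lSingle d ((D : ℤ) - 2 ^ n + 1 - a - e) vElt t
      else 0 := by
  rw [sum_hSingle_mul, if_pos ⟨h0, h1⟩, one_mul, basisMul_ll]
  have hZ := toFinQ_coe h0 h1
  have hN := toFinQ_coe_nat h0 h1
  simp only [ite_apply, Pi.zero_apply]
  refine if_congr (by omega) (hSingle_congrP _ _ (by omega))
    (if_congr Iff.rfl (lSingle_congrP _ _ (by omega)) rfl)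

lemma contract_hr_right {e : ℤ} (h0 : 0 ≤ e) (h1 : e ≤ d) (i : Fin (d + 1)) (t : QIdx d) :
    ∑ m : QIdx d, hSingle d e 1 m * basisMul n d D m (.inr i) t =
      lSingle d ((i : ℤ) - e) 1 t := by
  rw [sum_hSingle_mul, if_pos ⟨h0, h1⟩, one_mul, basisMul_lr]
  have hZ := toFinQ_coe h0 h1
  exact lSingle_congrP _ _ (by omega)

lemma contract_hr_left {e : ℤ} (h0 : 0 ≤ e) (h1 : e ≤ d) (i : Fin (d + 1)) (t : QIdx d) :
    ∑ m : QIdx d, hSingle d e 1 m * basisMul n d D (.inr i) m t =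
      lSingle d ((i : ℤ) - e) 1 t := by
  rw [sum_hSingle_mul, if_pos ⟨h0, h1⟩, one_mul, basisMul_rl]
  have hZ := toFinQ_coe h0 h1
  exact lSingle_congrP _ _ (by omega)

lemma contract_l_right {s : ℤ} (h1 : s ≤ d) (r : R2) (c : Fin (d + 1)) (t : QIdx d) :
    ∑ m : QIdx d, lSingle d s r m * basisMul n d D m (.inl c) t =
      lSingle d (s - c) r t := by
  rw [sum_lSingle_mul]
  by_cases h0 : 0 ≤ s
  · rw [if_pos ⟨h0, h1⟩, basisMul_rl]
    have hZ := toFinQ_coe h0 h1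
    rw [show ((toFinQ d s : Fin (d+1)) : ℤ) - (c : ℤ) = s - c by omega, mul_lSingle]
  · rw [if_neg (by omega)]
    exact (lSingle_out (Or.inl (by omega)) r t).symm

lemma contract_l_left {s : ℤ} (h1 : s ≤ d) (r : R2) (a : Fin (d + 1)) (t : QIdx d) :
    ∑ m : QIdx d, lSingle d s r m * basisMul n d D (.inl a) m t =
      lSingle d (s - a) r t := by
  rw [sum_lSingle_mul]
  by_cases h0 : 0 ≤ s
  · rw [if_pos ⟨h0, h1⟩, basisMul_lr]
    have hZ := toFinQ_coe h0 h1
    rw [show ((toFinQ d s : Fin (d+1)) : ℤ) - (a : ℤ) = s - a by omega, mul_lSingle]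
  · rw [if_neg (by omega)]
    exact (lSingle_out (Or.inl (by omega)) r t).symm

lemma contract_lr_right {s : ℤ} (h1 : s ≤ d) (r : R2) (j : Fin (d + 1)) (t : QIdx d) :
    ∑ m : QIdx d, lSingle d s r m * basisMul n d D m (.inr j) t =
      if s = d ∧ (j : ℕ) = d ∧ D % 4 = 0 then lSingle d 0 r t else 0 := by
  rw [sum_lSingle_mul]
  by_cases h0 : 0 ≤ s
  · rw [if_pos ⟨h0, h1⟩, basisMul_rr]
    have hZ := toFinQ_coe h0 h1
    simp only [ite_apply, Pi.zero_apply, mul_ite, mul_zero]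
    exact if_congr (by omega) (mul_lSingle _ _ _) rfl
  · rw [if_neg (by omega), if_neg (by omega)]

lemma contract_lr_left {s : ℤ} (h1 : s ≤ d) (r : R2) (i : Fin (d + 1)) (t : QIdx d) :
    ∑ m : QIdx d, lSingle d s r m * basisMul n d D (.inr i) m t =
      if (i : ℕ) = d ∧ s = d ∧ D % 4 = 0 then lSingle d 0 r t else 0 := by
  rw [sum_lSingle_mul]
  by_cases h0 : 0 ≤ s
  · rw [if_pos ⟨h0, h1⟩, basisMul_rr]
    have hZ := toFinQ_coe h0 h1
    simp only [ite_apply, Pi.zero_apply, mul_ite, mul_zero]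
    exact if_congr (by omega) (mul_lSingle _ _ _) rfl
  · rw [if_neg (by omega), if_neg (by omega)]

lemma basisMul_assoc (hn : 2 ≤ n) (hd : 1 ≤ d) (hD : D = 2 * d ∨ D = 2 * d + 1)
    (x y z t : QIdx d) :
    ∑ m : QIdx d, basisMul n d D x y m * basisMul n d D m z t =
      ∑ m : QIdx d, basisMul n d D y z m * basisMul n d D x m t := by
  have hP4 : 4 ≤ 2 ^ n := by
    calc (4:ℕ) = 2 ^ 2 := rfl
    _ ≤ 2 ^ n := Nat.pow_le_pow_right (by norm_num) hn
  have hPP : 2 ^ (n + 1) = 2 * 2 ^ n := by rw [pow_succ]; ring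
  have hcast : (2:ℤ) ^ n = ((2 ^ n : ℕ) : ℤ) := by push_cast; ring
  have hDd : D ≤ 2 * d + 1 := by omega
  rcases x with a | i <;> rcases y with b | j <;> rcases z with c | k
  · -- lll
    simp only [basisMul_ll]
    by_cases hab : (a : ℕ) + b ≤ d <;> by_cases hbc : (b : ℕ) + c ≤ d
    · simp only [if_pos hab, if_pos hbc]
      rw [contract_h_right n d D (by positivity) (by omega) c t,
        contract_h_left n d D (by positivity) (by omega) a t]
      split_ifs <;>
        first
          | rfl
          | exact hSingle_congrP _ _ (by omega)
          | exact lSingle_congrP _ _ (by omega)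
          | (exfalso; omega)
    · simp only [if_pos hab, if_neg hbc]
      rw [contract_h_right n d D (by positivity) (by omega) c t]
      by_cases hDB : 2 ^ (n + 1) - 1 ≤ D
      · simp only [if_pos hDB]
        rw [contract_l_left n d D (show (D:ℤ) - 2 ^ n + 1 - (b:ℤ) - (c:ℤ) ≤ d by omega) vElt a t]
        split_ifs <;> first | exact lSingle_congrP _ _ (by omega) | (exfalso; omega)
      · simp only [if_neg hDB, Pi.zero_apply, zero_mul, Finset.sum_const_zero]
        split_ifs <;> first | rfl | (exfalso; omega)
    · simp only [if_neg hab, if_pos hbc]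
      rw [contract_h_left n d D (by positivity) (by omega) a t]
      by_cases hDB : 2 ^ (n + 1) - 1 ≤ D
      · simp only [if_pos hDB]
        rw [contract_l_right n d D (show (D:ℤ) - 2 ^ n + 1 - (a:ℤ) - (b:ℤ) ≤ d by omega) vElt c t]
        split_ifs <;> first | exact lSingle_congrP _ _ (by omega) | (exfalso; omega)
      · simp only [if_neg hDB, Pi.zero_apply, zero_mul, Finset.sum_const_zero]
        split_ifs <;> first | rfl | (exfalso; omega)
    · simp only [if_neg hab, if_neg hbc]
      by_cases hDB : 2 ^ (n + 1) - 1 ≤ D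
      · simp only [if_pos hDB]
        rw [contract_l_right n d D (show (D:ℤ) - 2 ^ n + 1 - (a:ℤ) - (b:ℤ) ≤ d by omega) vElt c t,
          contract_l_left n d D (show (D:ℤ) - 2 ^ n + 1 - (b:ℤ) - (c:ℤ) ≤ d by omega) vElt a t]
        exact lSingle_congrP _ _ (by omega)
      · simp only [if_neg hDB, Pi.zero_apply, zero_mul, Finset.sum_const_zero]
  · -- llr
    simp only [basisMul_ll, basisMul_lr]
    rw [contract_l_left n d D (show (k:ℤ) - (b:ℤ) ≤ d by omega) 1 a t]
    by_cases hab : (a : ℕ) + b ≤ d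
    · simp only [if_pos hab]
      rw [contract_hr_right n d D (by positivity) (by omega) k t]
      exact lSingle_congrP _ _ (by omega)
    · simp only [if_neg hab]
      by_cases hDB : 2 ^ (n + 1) - 1 ≤ D
      · simp only [if_pos hDB]
        rw [contract_lr_right n d D (show (D:ℤ) - 2 ^ n + 1 - (a:ℤ) - (b:ℤ) ≤ d by omega) vElt k t]
        split_ifs <;>
          first | (exfalso; omega) | exact (lSingle_out (by omega) _ _).symm
      · simp only [if_neg hDB, Pi.zero_apply, zero_mul, Finset.sum_const_zero]
        exact (lSingle_out (by omega) _ _).symm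
  · -- lrl
    simp only [basisMul_lr, basisMul_rl]
    rw [contract_l_right n d D (show (j:ℤ) - (a:ℤ) ≤ d by omega) 1 c t,
      contract_l_left n d D (show (j:ℤ) - (c:ℤ) ≤ d by omega) 1 a t]
    exact lSingle_congrP _ _ (by ring)
  · -- lrr
    simp only [basisMul_lr, basisMul_rr]
    rw [contract_lr_right n d D (show (j:ℤ) - (a:ℤ) ≤ d by omega) 1 k t]
    by_cases hc : (j : ℕ) = d ∧ (k : ℕ) = d ∧ D % 4 = 0
    · simp only [if_pos hc]
      rw [contract_l_left n d D (show (0:ℤ) ≤ d by omega) 1 a t]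
      split_ifs <;>
        first
          | exact lSingle_congrP _ _ (by omega)
          | exact (lSingle_out (by omega) _ _).symm
          | (exfalso; omega)
    · simp only [if_neg hc, Pi.zero_apply, zero_mul, Finset.sum_const_zero]
      split_ifs <;> first | rfl | (exfalso; omega)
  · -- rll
    simp only [basisMul_rl, basisMul_ll]
    rw [contract_l_right n d D (show (i:ℤ) - (b:ℤ) ≤ d by omega) 1 c t]
    by_cases hbc : (b : ℕ) + c ≤ d
    · simp only [if_pos hbc]
      rw [contract_hr_left n d D (by positivity) (by omega) i t]
      exact lSingle_congrP _ _ (by omega)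
    · simp only [if_neg hbc]
      by_cases hDB : 2 ^ (n + 1) - 1 ≤ D
      · simp only [if_pos hDB]
        rw [contract_lr_left n d D (show (D:ℤ) - 2 ^ n + 1 - (b:ℤ) - (c:ℤ) ≤ d by omega) vElt i t]
        split_ifs <;>
          first | (exfalso; omega) | exact lSingle_out (by omega) _ _
      · simp only [if_neg hDB, Pi.zero_apply, zero_mul, Finset.sum_const_zero]
        exact lSingle_out (by omega) _ _
  · -- rlr
    simp only [basisMul_rl, basisMul_lr]
    rw [contract_lr_right n d D (show (i:ℤ) - (b:ℤ) ≤ d by omega) 1 k t,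
      contract_lr_left n d D (show (k:ℤ) - (b:ℤ) ≤ d by omega) 1 i t]
    split_ifs <;> first | rfl | (exfalso; omega)
  · -- rrl
    simp only [basisMul_rr, basisMul_rl]
    rw [contract_lr_left n d D (show (j:ℤ) - (c:ℤ) ≤ d by omega) 1 i t]
    by_cases hc : (i : ℕ) = d ∧ (j : ℕ) = d ∧ D % 4 = 0
    · simp only [if_pos hc]
      rw [contract_l_right n d D (show (0:ℤ) ≤ d by omega) 1 c t]
      split_ifs <;>
        first
          | exact lSingle_congrP _ _ (by omega)
          | exact lSingle_out (by omega) _ _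
          | (exfalso; omega)
    · simp only [if_neg hc, Pi.zero_apply, zero_mul, Finset.sum_const_zero]
      split_ifs <;> first | rfl | (exfalso; omega)
  · -- rrr
    simp only [basisMul_rr]
    by_cases hc1 : (i : ℕ) = d ∧ (j : ℕ) = d ∧ D % 4 = 0
    · simp only [if_pos hc1]
      rw [contract_lr_right n d D (show (0:ℤ) ≤ d by omega) 1 k t]
      by_cases hc2 : (j : ℕ) = d ∧ (k : ℕ) = d ∧ D % 4 = 0
      · simp only [if_pos hc2]
        rw [contract_lr_left n d D (show (0:ℤ) ≤ d by omega) 1 i t]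
        split_ifs <;> first | rfl | (exfalso; omega)
      · simp only [if_neg hc2, Pi.zero_apply, zero_mul, Finset.sum_const_zero]
        split_ifs <;> first | rfl | (exfalso; omega)
    · simp only [if_neg hc1, Pi.zero_apply, zero_mul, Finset.sum_const_zero]
      by_cases hc2 : (j : ℕ) = d ∧ (k : ℕ) = d ∧ D % 4 = 0
      · simp only [if_pos hc2]
        rw [contract_lr_left n d D (show (0:ℤ) ≤ d by omega) 1 i t]
        split_ifs <;> first | rfl | (exfalso; omega)
      · simp only [if_neg hc2, Pi.zero_apply, zero_mul, Finset.sum_const_zero]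
end

theorem quadricMul_comm_assoc (n d D : ℕ) (hn : 2 ≤ n) (hd : 1 ≤ d)
    (hD : D = 2 * d ∨ D = 2 * d + 1) :
    (∀ x y : QIdx d → R2, quadricMul n d D x y = quadricMul n d D y x) ∧
    (∀ x y z : QIdx d → R2,
      quadricMul n d D (quadricMul n d D x y) z =
        quadricMul n d D x (quadricMul n d D y z)) ∧
    (∀ x : QIdx d → R2, quadricMul n d D (hSingle d 0 1) x = x) := by
  refine ⟨?_, ?_, ?_⟩
  · intro x y
    funext k
    show (∑ i : QIdx d, ∑ j : QIdx d, x i * y j * basisMul n d D i j k) =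
      ∑ i : QIdx d, ∑ j : QIdx d, y i * x j * basisMul n d D i j k
    rw [Finset.sum_comm]
    refine Finset.sum_congr rfl fun j _ => Finset.sum_congr rfl fun i _ => ?_
    rw [basisMul_comm n d D i j]
    ring
  · intro x y z
    funext k
    trans (∑ a : QIdx d, ∑ b : QIdx d, ∑ c : QIdx d,
      x a * y b * z c * ∑ m : QIdx d, basisMul n d D a b m * basisMul n d D m c k)
    · have reorder : ∀ F : QIdx d → QIdx d → QIdx d → QIdx d → R2,
          (∑ m : QIdx d, ∑ c : QIdx d, ∑ a : QIdx d, ∑ b : QIdx d, F a b c m)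
            = ∑ a : QIdx d, ∑ b : QIdx d, ∑ c : QIdx d, ∑ m : QIdx d, F a b c m := by
        intro F
        calc (∑ m : QIdx d, ∑ c : QIdx d, ∑ a : QIdx d, ∑ b : QIdx d, F a b c m)
            = ∑ c : QIdx d, ∑ m : QIdx d, ∑ a : QIdx d, ∑ b : QIdx d, F a b c m :=
              Finset.sum_comm
          _ = ∑ c : QIdx d, ∑ a : QIdx d, ∑ b : QIdx d, ∑ m : QIdx d, F a b c m :=
              Finset.sum_congr rfl fun c _ => by
                rw [Finset.sum_comm]
                exact Finset.sum_congr rfl fun a _ => Finset.sum_comm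
          _ = ∑ a : QIdx d, ∑ c : QIdx d, ∑ b : QIdx d, ∑ m : QIdx d, F a b c m :=
              Finset.sum_comm
          _ = ∑ a : QIdx d, ∑ b : QIdx d, ∑ c : QIdx d, ∑ m : QIdx d, F a b c m :=
              Finset.sum_congr rfl fun a _ => Finset.sum_comm
      simp only [quadricMul, Finset.sum_mul, Finset.mul_sum]
      rw [reorder fun a b c m => x a * y b * basisMul n d D a b m * z c * basisMul n d D m c k]
      exact Finset.sum_congr rfl fun a _ => Finset.sum_congr rfl fun b _ =>
        Finset.sum_congr rfl fun c _ => Finset.sum_congr rfl fun m _ => by ring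
    · trans (∑ a : QIdx d, ∑ b : QIdx d, ∑ c : QIdx d,
        x a * y b * z c * ∑ m : QIdx d, basisMul n d D b c m * basisMul n d D a m k)
      · exact Finset.sum_congr rfl fun a _ => Finset.sum_congr rfl fun b _ =>
          Finset.sum_congr rfl fun c _ => by
            rw [basisMul_assoc n d D hn hd hD a b c k]
      · have reorder : ∀ F : QIdx d → QIdx d → QIdx d → QIdx d → R2,
            (∑ a : QIdx d, ∑ m : QIdx d, ∑ b : QIdx d, ∑ c : QIdx d, F a b c m)
              = ∑ a : QIdx d, ∑ b : QIdx d, ∑ c : QIdx d, ∑ m : QIdx d, F a b c m := by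
          intro F
          refine Finset.sum_congr rfl fun a _ => ?_
          calc (∑ m : QIdx d, ∑ b : QIdx d, ∑ c : QIdx d, F a b c m)
              = ∑ b : QIdx d, ∑ m : QIdx d, ∑ c : QIdx d, F a b c m := Finset.sum_comm
            _ = ∑ b : QIdx d, ∑ c : QIdx d, ∑ m : QIdx d, F a b c m :=
                Finset.sum_congr rfl fun b _ => Finset.sum_comm
        simp only [quadricMul, Finset.sum_mul, Finset.mul_sum]
        rw [reorder fun a b c m => x a * (y b * z c * basisMul n d D b c m) * basisMul n d D a m k]
        exact Finset.sum_congr rfl fun a _ => Finset.sum_congr rfl fun b _ =>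
          Finset.sum_congr rfl fun c _ => Finset.sum_congr rfl fun m _ => by ring
  · intro x
    funext k
    have hfZ : ((toFinQ d 0 : Fin (d + 1)) : ℤ) = 0 := toFinQ_coe le_rfl (by omega)
    show (∑ i : QIdx d, ∑ j : QIdx d, hSingle d 0 1 i * x j * basisMul n d D i j k) = x k
    trans (∑ i : QIdx d, hSingle d 0 1 i * ∑ j : QIdx d, x j * basisMul n d D i j k)
    · simp only [Finset.mul_sum]
      exact Finset.sum_congr rfl fun i _ => Finset.sum_congr rfl fun j _ => by ring
    · rw [sum_hSingle_mul 0 1 (fun i => ∑ j : QIdx d, x j * basisMul n d D i j k),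
        if_pos ⟨le_rfl, by omega⟩, one_mul]
      rcases k with kc | kc
      · rw [Fintype.sum_sum_type]
        have h2 : (∑ jj : Fin (d + 1),
            x (.inr jj) * basisMul n d D (.inl (toFinQ d 0)) (.inr jj) (.inl kc)) = 0 := by
          simp [basisMul_lr, lSingle]
        rw [h2, add_zero]
        rw [Finset.sum_eq_single kc]
        · rw [basisMul_ll, if_pos (by omega), show ((toFinQ d 0 : Fin (d + 1)) : ℤ) + (kc : ℤ)
            = (kc : ℤ) by omega]
          have h1 : hSingle d (kc : ℤ) 1 (.inl kc) = 1 := by simp [hSingle]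
          rw [h1, mul_one]
        · intro b _ hb
          rw [basisMul_ll, if_pos (by omega)]
          have : hSingle d (((toFinQ d 0 : Fin (d + 1)) : ℤ) + (b : ℤ)) 1 (.inl kc) = 0 := by
            have hbk : (kc : ℤ) ≠ ((toFinQ d 0 : Fin (d + 1)) : ℤ) + (b : ℤ) := by
              intro h
              exact hb (Fin.ext (by omega)).symm
            simp [hSingle, hbk]
          rw [this, mul_zero]
        · simp
      · rw [Fintype.sum_sum_type]
        have h1 : (∑ b : Fin (d + 1),
            x (.inl b) * basisMul n d D (.inl (toFinQ d 0)) (.inl b) (.inr kc)) = 0 := by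
          refine Finset.sum_eq_zero fun b _ => ?_
          rw [basisMul_ll, if_pos (by omega)]
          have : hSingle d (((toFinQ d 0 : Fin (d + 1)) : ℤ) + (b : ℤ)) 1 (.inr kc) = 0 := rfl
          rw [this, mul_zero]
        rw [h1, zero_add]
        rw [Finset.sum_eq_single kc]
        · rw [basisMul_lr, show ((kc : ℤ) - ((toFinQ d 0 : Fin (d + 1)) : ℤ)) = (kc : ℤ) by omega]
          have h3 : lSingle d (kc : ℤ) 1 (.inr kc) = 1 := by simp [lSingle]
          rw [h3, mul_one]
        · intro b _ hb
          rw [basisMul_lr]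
          have : lSingle d ((b : ℤ) - ((toFinQ d 0 : Fin (d + 1)) : ℤ)) 1 (.inr kc) = 0 := by
            have hbk : (kc : ℤ) ≠ (b : ℤ) - ((toFinQ d 0 : Fin (d + 1)) : ℤ) := by
              intro h
              exact hb (Fin.ext (by omega)).symm
            simp [lSingle, hbk]
          rw [this, mul_zero]
        · simp

end
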